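/- Thermodynamic integration identity for geometric paths: log(z₁/z₀) = ∫₀¹ ∫_Θ p_t(θ) log(q₁(θ)/q₀(θ)) dν(θ) dt, where p_t is the normalized geometric-path density; i.e., the log-ratio of the normalizing constants equals the integral over temperatures t ∈ [0,1] of the expectation under p_t of log(q₁/q₀). -/

import Mathlib

open MeasureTheory Real Set

lemma aux_unnorm_eq {x y : ℝ} (hx : 0 < x) (hy : 0 < y) (u : ℝ) :
    x ^ u * y ^ (1 - u) = y * (x / y) ^ u := by
  rw [Real.div_rpow hx.le hy.le, Real.rpow_sub hy, Real.rpow_one]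
  field_simp

lemma aux_log_bound {r : ℝ} (hr : 0 < r) {δ : ℝ} (hδ : 0 < δ) :
    |Real.log r| ≤ δ⁻¹ * (r ^ δ + r ^ (-δ)) := by
  have h1 : Real.log r ≤ δ⁻¹ * r ^ δ := by
    have h := Real.log_le_sub_one_of_pos (Real.rpow_pos_of_pos hr δ)
    rw [Real.log_rpow hr] at h
    have hp := Real.rpow_pos_of_pos hr δ
    have h' : δ * Real.log r ≤ r ^ δ := by linarith
    rw [inv_mul_eq_div, le_div_iff₀ hδ]
    linarith [mul_comm δ (Real.log r)]
  have h2 : -Real.log r ≤ δ⁻¹ * r ^ (-δ) := by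
    have h := Real.log_le_sub_one_of_pos (Real.rpow_pos_of_pos hr (-δ))
    rw [Real.log_rpow hr] at h
    have h' : δ * (-Real.log r) ≤ r ^ (-δ) := by nlinarith
    rw [inv_mul_eq_div, le_div_iff₀ hδ]
    linarith [mul_comm δ (-Real.log r)]
  have hp1 := Real.rpow_pos_of_pos hr δ
  have hp2 := Real.rpow_pos_of_pos hr (-δ)
  rcases abs_cases (Real.log r) with ⟨he, _⟩ | ⟨he, _⟩ <;> rw [he] <;> nlinarith

/-- core domination: `x^u y^(1-u) |log(x/y)| ≤ δ⁻¹ (x^(u+δ)y^(1-(u+δ)) + x^(u-δ)y^(1-(u-δ)))` -/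
lemma aux_rpow_log_bound {x y : ℝ} (hx : 0 < x) (hy : 0 < y) {u δ : ℝ} (hδ : 0 < δ) :
    x ^ u * y ^ (1 - u) * |Real.log (x / y)| ≤
      δ⁻¹ * (x ^ (u + δ) * y ^ (1 - (u + δ)) + x ^ (u - δ) * y ^ (1 - (u - δ))) := by
  have hr : 0 < x / y := div_pos hx hy
  have h0 := aux_log_bound hr hδ
  have e0 := aux_unnorm_eq hx hy u
  have e1 := aux_unnorm_eq hx hy (u + δ)
  have e2 := aux_unnorm_eq hx hy (u - δ)
  rw [e0, e1, e2]
  have hru := Real.rpow_pos_of_pos hr u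
  calc y * (x/y) ^ u * |Real.log (x/y)| ≤ y * (x/y) ^ u * (δ⁻¹ * ((x/y) ^ δ + (x/y) ^ (-δ))) := by
        apply mul_le_mul_of_nonneg_left h0 (by positivity)
    _ = δ⁻¹ * (y * ((x/y) ^ u * (x/y) ^ δ) + y * ((x/y) ^ u * (x/y) ^ (-δ))) := by ring
    _ = δ⁻¹ * (y * (x/y) ^ (u + δ) + y * (x/y) ^ (u - δ)) := by
        rw [← Real.rpow_add hr, ← Real.rpow_add hr]; ring_nf

/-- convexity-type bound: exponent in `[a,b]` is dominated by endpoints. -/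
lemma aux_exponent_bound {x y : ℝ} (hx : 0 < x) (hy : 0 < y) {a b c : ℝ}
    (hac : a ≤ c) (hcb : c ≤ b) :
    x ^ c * y ^ (1 - c) ≤ x ^ a * y ^ (1 - a) + x ^ b * y ^ (1 - b) := by
  have hr : 0 < x / y := div_pos hx hy
  rw [aux_unnorm_eq hx hy, aux_unnorm_eq hx hy, aux_unnorm_eq hx hy]
  have hpa := Real.rpow_pos_of_pos hr a
  have hpb := Real.rpow_pos_of_pos hr b
  rcases le_total 1 (x / y) with h | h
  · have := Real.rpow_le_rpow_of_exponent_le h hcb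
    nlinarith
  · have := Real.rpow_le_rpow_of_exponent_ge hr h hac
    nlinarith

lemma aux_hasDerivAt {x y : ℝ} (hx : 0 < x) (hy : 0 < y) (t : ℝ) :
    HasDerivAt (fun u : ℝ => x ^ u * y ^ (1 - u))
      (x ^ t * y ^ (1 - t) * Real.log (x / y)) t := by
  have hrw : (fun u : ℝ => x ^ u * y ^ (1 - u))
      = fun u => Real.exp ((Real.log x - Real.log y) * u + Real.log y) := by
    funext u
    rw [Real.rpow_def_of_pos hx, Real.rpow_def_of_pos hy, ← Real.exp_add]
    ring_nf
  rw [hrw]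
  have h : HasDerivAt (fun u : ℝ => (Real.log x - Real.log y) * u + Real.log y)
      (Real.log x - Real.log y) t := by
    simpa using ((hasDerivAt_id t).const_mul (Real.log x - Real.log y)).add_const (Real.log y)
  have h2 := h.exp
  convert h2 using 1
  rw [Real.log_div hx.ne' hy.ne', Real.rpow_def_of_pos hx, Real.rpow_def_of_pos hy, ← Real.exp_add]
  ring_nf

set_option maxHeartbeats 1000000 in
theorem thermodynamic_integration_identity
    {Θ : Type*} [MeasurableSpace Θ] (ν : Measure Θ) [SigmaFinite ν]
    (p0 p1 : Θ → ℝ)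
    (hp0pos : ∀ᵐ θ ∂ν, 0 < p0 θ) (hp1pos : ∀ᵐ θ ∂ν, 0 < p1 θ)
    (hp0int : ∫ θ, p0 θ ∂ν = 1) (hp1int : ∫ θ, p1 θ ∂ν = 1)
    (z0 z1 : ℝ) (hz0 : 0 < z0) (hz1 : 0 < z1)
    (μc : ℝ → ℝ) (hμc : ∀ t, μc t = ∫ θ, p1 θ ^ t * p0 θ ^ (1 - t) ∂ν)
    (hμint : ∀ t ∈ Set.Icc (0:ℝ) 1,
      Integrable (fun θ => p1 θ ^ t * p0 θ ^ (1 - t)) ν)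
    (hμpos : ∀ t ∈ Set.Icc (0:ℝ) 1, 0 < μc t)
    (hdom : Integrable
      (fun x : ℝ × Θ =>
        (p1 x.2 ^ x.1 * p0 x.2 ^ (1 - x.1) / μc x.1) * |Real.log (p1 x.2 / p0 x.2)|)
      ((volume.restrict (Set.Icc (0:ℝ) 1)).prod ν)) :
    Real.log (z1 / z0)
      = ∫ t in (0:ℝ)..1, ∫ θ,
          (p1 θ ^ t * p0 θ ^ (1 - t) / μc t)
            * Real.log ((z1 * p1 θ) / (z0 * p0 θ)) ∂ν := by
  -- notation
  set G : ℝ → Θ → ℝ := fun t θ => p1 θ ^ t * p0 θ ^ (1 - t) with hG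
  set L : Θ → ℝ := fun θ => Real.log (p1 θ / p0 θ) with hL
  set f : ℝ → ℝ := fun t => ∫ θ, G t θ * L θ ∂ν with hf
  -- basic integrability and measurability
  have hp0int' : Integrable p0 ν := by
    have := hμint 0 (by norm_num)
    simpa [hG] using this
  have hp1int' : Integrable p1 ν := by
    have := hμint 1 (by norm_num)
    simpa [hG] using this
  have hp0m : AEMeasurable p0 ν := hp0int'.aemeasurable
  have hp1m : AEMeasurable p1 ν := hp1int'.aemeasurable
  have hLm : AEMeasurable L ν := Real.measurable_log.comp_aemeasurable (hp1m.div hp0m)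
  have hGm : ∀ t : ℝ, AEMeasurable (G t) ν := fun t =>
    (hp1m.pow aemeasurable_const).mul (hp0m.pow aemeasurable_const)
  have hμc0 : μc 0 = 1 := by
    rw [hμc]
    simp only [Real.rpow_zero, sub_zero, Real.rpow_one, one_mul]
    exact hp0int
  have hμc1 : μc 1 = 1 := by
    rw [hμc]
    simp only [Real.rpow_one, sub_self, Real.rpow_zero, mul_one]
    exact hp1int
  -- μc ≤ 1 on [0,1]
  have hμle1 : ∀ t ∈ Set.Icc (0:ℝ) 1, μc t ≤ 1 := by
    intro t ht
    rw [hμc]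
    have hb : ∀ᵐ θ ∂ν, p1 θ ^ t * p0 θ ^ (1 - t) ≤ t * p1 θ + (1 - t) * p0 θ := by
      filter_upwards [hp0pos, hp1pos] with θ h0 h1
      exact Real.geom_mean_le_arith_mean2_weighted ht.1 (by linarith [ht.2]) h1.le h0.le
        (by ring)
    calc (∫ θ, p1 θ ^ t * p0 θ ^ (1 - t) ∂ν)
        ≤ ∫ θ, t * p1 θ + (1 - t) * p0 θ ∂ν :=
          integral_mono_ae (hμint t ht) ((hp1int'.const_mul t).add (hp0int'.const_mul (1 - t))) hb
      _ = 1 := by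
          rw [integral_add (hp1int'.const_mul t) (hp0int'.const_mul (1 - t)),
            integral_const_mul, integral_const_mul, hp0int, hp1int]
          ring
  -- product measure setup
  set ρ : Measure (ℝ × Θ) := (volume.restrict (Set.Icc (0:ℝ) 1)).prod ν with hρ
  have qfst : Measure.QuasiMeasurePreserving (Prod.fst : ℝ × Θ → ℝ) ρ
      (volume.restrict (Set.Icc (0:ℝ) 1)) := Measure.quasiMeasurePreserving_fst
  have qsnd : Measure.QuasiMeasurePreserving (Prod.snd : ℝ × Θ → Θ) ρ ν :=
    Measure.quasiMeasurePreserving_snd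
  have hposP : ∀ᵐ x : ℝ × Θ ∂ρ, 0 < p0 x.2 ∧ 0 < p1 x.2 :=
    qsnd.ae (hp0pos.and hp1pos)
  have hmemP : ∀ᵐ x : ℝ × Θ ∂ρ, x.1 ∈ Set.Icc (0:ℝ) 1 :=
    qfst.ae (ae_restrict_mem measurableSet_Icc)
  have hGLP_m : AEMeasurable (fun x : ℝ × Θ => G x.1 x.2 * L x.2) ρ := by
    have h1 : AEMeasurable (fun x : ℝ × Θ => p1 x.2) ρ :=
      hp1m.comp_quasiMeasurePreserving qsnd
    have h0 : AEMeasurable (fun x : ℝ × Θ => p0 x.2) ρ :=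
      hp0m.comp_quasiMeasurePreserving qsnd
    exact ((h1.pow measurable_fst.aemeasurable).mul
      (h0.pow (aemeasurable_const.sub measurable_fst.aemeasurable))).mul
      (hLm.comp_quasiMeasurePreserving qsnd)
  -- product integrability of (t,θ) ↦ G t θ * L θ
  have hGLprod : Integrable (fun x : ℝ × Θ => G x.1 x.2 * L x.2) ρ := by
    apply Integrable.mono' hdom hGLP_m.aestronglyMeasurable
    filter_upwards [hposP, hmemP] with x hpos hmem
    have hGpos : 0 < G x.1 x.2 :=
      mul_pos (Real.rpow_pos_of_pos hpos.2 _) (Real.rpow_pos_of_pos hpos.1 _)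
    have hμx := hμpos x.1 hmem
    have hμx1 := hμle1 x.1 hmem
    rw [Real.norm_eq_abs, abs_mul, abs_of_pos hGpos]
    calc G x.1 x.2 * |L x.2| ≤ (G x.1 x.2 / μc x.1) * |L x.2| := by
          apply mul_le_mul_of_nonneg_right _ (abs_nonneg _)
          rw [div_eq_mul_inv]
          exact le_mul_of_one_le_right hGpos.le ((one_le_inv₀ hμx).mpr hμx1)
      _ = (p1 x.2 ^ x.1 * p0 x.2 ^ (1 - x.1) / μc x.1) * |Real.log (p1 x.2 / p0 x.2)| := rfl
  have hf_int : Integrable f (volume.restrict (Set.Icc (0:ℝ) 1)) := by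
    have := hGLprod.integral_prod_left
    simpa [hf] using this
  have hfII : IntervalIntegrable f volume 0 1 := by
    rw [intervalIntegrable_iff_integrableOn_Ioc_of_le zero_le_one]
    exact IntegrableOn.mono_set hf_int Set.Ioc_subset_Icc_self
  -- key identity: μc is the primitive of f
  have hkey : ∀ t ∈ Set.Icc (0:ℝ) 1, μc t = 1 + ∫ u in (0:ℝ)..t, f u := by
    intro t ht
    have hres : volume.restrict (Set.Icc (0:ℝ) t)
        = (volume.restrict (Set.Icc (0:ℝ) 1)).restrict (Set.Icc (0:ℝ) t) := by
      rw [Measure.restrict_restrict measurableSet_Icc,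
        Set.inter_eq_left.mpr (Set.Icc_subset_Icc le_rfl ht.2)]
    have h1 : Integrable (fun x : ℝ × Θ => G x.1 x.2 * L x.2)
        ((volume.restrict (Set.Icc (0:ℝ) t)).prod ν) := by
      rw [hres]
      have hpr := Measure.prod_restrict (μ := volume.restrict (Set.Icc (0:ℝ) 1)) (ν := ν)
        (Set.Icc (0:ℝ) t) Set.univ
      rw [Measure.restrict_univ] at hpr
      rw [hpr]
      exact hGLprod.restrict
    have swap : ∫ u in Set.Icc (0:ℝ) t, f u
        = ∫ θ, (∫ u in Set.Icc (0:ℝ) t, G u θ * L θ) ∂ν := by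
      exact MeasureTheory.integral_integral_swap (f := fun u θ => G u θ * L θ) h1
    have hinner : ∀ᵐ θ ∂ν, (∫ u in Set.Icc (0:ℝ) t, G u θ * L θ) = G t θ - p0 θ := by
      filter_upwards [hp0pos, hp1pos] with θ h0 h1'
      have hcont : Continuous (fun u : ℝ => G u θ * L θ) := by
        have hrw : (fun u : ℝ => G u θ * L θ)
            = fun u => Real.exp (Real.log (p1 θ) * u) * Real.exp (Real.log (p0 θ) * (1 - u))
              * L θ := by
          funext u
          rw [hG]
          simp only
          rw [Real.rpow_def_of_pos h1', Real.rpow_def_of_pos h0]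
        rw [hrw]
        exact ((Real.continuous_exp.comp (continuous_const.mul continuous_id)).mul
          (Real.continuous_exp.comp (continuous_const.mul
            (continuous_const.sub continuous_id)))).mul continuous_const
      have hftc := intervalIntegral.integral_eq_sub_of_hasDerivAt
        (f := fun u : ℝ => G u θ) (f' := fun u : ℝ => G u θ * L θ)
        (fun u _ => aux_hasDerivAt h1' h0 u) (hcont.intervalIntegrable 0 t)
      rw [MeasureTheory.integral_Icc_eq_integral_Ioc, ← intervalIntegral.integral_of_le ht.1,
        hftc]
      rw [hG]
      simp [Real.rpow_zero, Real.rpow_one]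
    have : ∫ u in Set.Icc (0:ℝ) t, f u = μc t - 1 := by
      rw [swap, integral_congr_ae hinner, integral_sub (hμint t ht) hp0int', hp0int, ← hμc]
    rw [intervalIntegral.integral_of_le ht.1, ← MeasureTheory.integral_Icc_eq_integral_Ioc, this]
    ring
  -- continuity of μc on [0,1]
  have hμcont : ContinuousOn μc (Set.Icc (0:ℝ) 1) := by
    have hprim : ContinuousOn (fun t => 1 + ∫ u in (0:ℝ)..t, f u) (Set.Icc (0:ℝ) 1) := by
      apply continuousOn_const.add
      have := intervalIntegral.continuousOn_primitive_interval
        (a := 0) (b := 1) (μ := volume) (f := f) ?_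
      · simpa [Set.uIcc_of_le (zero_le_one' ℝ)] using this
      · rw [Set.uIcc_of_le (zero_le_one' ℝ)]; exact hf_int
    exact hprim.congr fun t ht => hkey t ht
  -- positive lower bound for μc on [0,1]
  obtain ⟨t0, ht0, hmin⟩ := isCompact_Icc.exists_isMinOn (Set.nonempty_Icc.mpr zero_le_one)
    hμcont
  have hc0 : 0 < μc t0 := hμpos t0 ht0
  -- continuity of f on (0,1)
  have hf_cont : ∀ t ∈ Set.Ioo (0:ℝ) 1, ContinuousAt f t := by
    intro t ht
    set δ : ℝ := min t (1 - t) / 4 with hδdef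
    have hδ : 0 < δ := by
      have := ht.1; have := ht.2
      apply div_pos _ (by norm_num)
      exact lt_min (by linarith) (by linarith)
    have hδt : 4 * δ ≤ min t (1 - t) := by rw [hδdef]; ring_nf; exact le_rfl
    have hmem1 : t - 2 * δ ∈ Set.Icc (0:ℝ) 1 := by
      constructor
      · have := min_le_left t (1 - t); nlinarith
      · have := ht.2; nlinarith
    have hmem2 : t + 2 * δ ∈ Set.Icc (0:ℝ) 1 := by
      constructor
      · have := ht.1; nlinarith
      · have := min_le_right t (1 - t); nlinarith
    apply continuousAt_of_dominated (bound := fun θ =>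
      δ⁻¹ * (2 * (G (t - 2 * δ) θ + G (t + 2 * δ) θ)))
    · exact Filter.Eventually.of_forall fun s =>
        ((hGm s).mul hLm).aestronglyMeasurable
    · filter_upwards [Ioo_mem_nhds (show t - δ < t by linarith) (show t < t + δ by linarith)]
        with s hs
      filter_upwards [hp0pos, hp1pos] with θ h0 h1
      have hGpos : 0 < G s θ :=
        mul_pos (Real.rpow_pos_of_pos h1 _) (Real.rpow_pos_of_pos h0 _)
      rw [Real.norm_eq_abs, abs_mul, abs_of_pos hGpos]
      have key := aux_rpow_log_bound h1 h0 (u := s) hδ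
      have hb1 : G (s + δ) θ ≤ G (t - 2*δ) θ + G (t + 2*δ) θ := by
        simp only [hG]
        exact aux_exponent_bound h1 h0 (by linarith [hs.1]) (by linarith [hs.2])
      have hb2 : G (s - δ) θ ≤ G (t - 2*δ) θ + G (t + 2*δ) θ := by
        simp only [hG]
        exact aux_exponent_bound h1 h0 (by linarith [hs.1]) (by linarith [hs.2])
      have hδinv : (0:ℝ) ≤ δ⁻¹ := by positivity
      calc G s θ * |L θ| ≤ δ⁻¹ * (G (s + δ) θ + G (s - δ) θ) := by
            simp only [hG, hL]; exact key
        _ ≤ δ⁻¹ * (2 * (G (t - 2*δ) θ + G (t + 2*δ) θ)) := by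
            apply mul_le_mul_of_nonneg_left _ hδinv
            linarith
    · exact ((hμint _ hmem1).add (hμint _ hmem2)).const_mul 2 |>.const_mul δ⁻¹
    · filter_upwards [hp0pos, hp1pos] with θ h0 h1
      exact ((aux_hasDerivAt h1 h0 t).continuousAt).mul continuousAt_const
  -- derivative of μc on (0,1)
  have hμderiv : ∀ t ∈ Set.Ioo (0:ℝ) 1, HasDerivAt μc (f t) t := by
    intro t ht
    have hII : IntervalIntegrable f volume 0 t := by
      apply hfII.mono_set
      rw [Set.uIcc_of_le ht.1.le, Set.uIcc_of_le zero_le_one]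
      exact Set.Icc_subset_Icc le_rfl ht.2.le
    have hsm : StronglyMeasurableAtFilter f (nhds t) volume := by
      refine ⟨Set.Ioo 0 1, Ioo_mem_nhds ht.1 ht.2, ?_⟩
      exact hf_int.aestronglyMeasurable.mono_measure
        (Measure.restrict_mono Set.Ioo_subset_Icc_self le_rfl)
    have hd := (intervalIntegral.integral_hasDerivAt_right hII hsm (hf_cont t ht)).const_add 1
    apply hd.congr_of_eventuallyEq
    filter_upwards [Ioo_mem_nhds ht.1 ht.2] with u hu
    exact hkey u (Set.Ioo_subset_Icc_self hu)
  -- FTC for log ∘ μc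
  have hgcont : ContinuousOn (fun u => Real.log (μc u)) (Set.Icc (0:ℝ) 1) := fun u hu =>
    (Real.continuousAt_log (hμpos u hu).ne').comp_continuousWithinAt (hμcont u hu)
  have hfdiv_int : Integrable (fun u => f u / μc u) (volume.restrict (Set.Icc (0:ℝ) 1)) := by
    apply Integrable.mono' (hf_int.norm.const_mul (μc t0)⁻¹)
    · exact (hf_int.aemeasurable.div
        (hμcont.aemeasurable measurableSet_Icc)).aestronglyMeasurable
    · filter_upwards [ae_restrict_mem measurableSet_Icc] with u hu
      rw [Real.norm_eq_abs, abs_div, abs_of_pos (hμpos u hu)]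
      calc |f u| / μc u ≤ |f u| / μc t0 :=
            div_le_div_of_nonneg_left (abs_nonneg _) hc0 (hmin hu)
        _ = (μc t0)⁻¹ * ‖f u‖ := by rw [Real.norm_eq_abs]; ring
  have hfdivII : IntervalIntegrable (fun u => f u / μc u) volume 0 1 := by
    rw [intervalIntegrable_iff_integrableOn_Ioc_of_le zero_le_one]
    exact IntegrableOn.mono_set hfdiv_int Set.Ioc_subset_Icc_self
  have hFTC : ∫ u in (0:ℝ)..1, f u / μc u = 0 := by
    have := intervalIntegral.integral_eq_sub_of_hasDeriv_right_of_le zero_le_one hgcont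
      (fun u hu => ((hμderiv u hu).log (hμpos u (Set.Ioo_subset_Icc_self hu)).ne').hasDerivWithinAt)
      hfdivII
    rw [this, hμc0, hμc1, Real.log_one, sub_zero]
  -- inner integral identity on (0,1)
  have hinner : ∀ t ∈ Set.Ioo (0:ℝ) 1,
      (∫ θ, (p1 θ ^ t * p0 θ ^ (1 - t) / μc t) * Real.log ((z1 * p1 θ) / (z0 * p0 θ)) ∂ν)
        = Real.log (z1 / z0) + f t / μc t := by
    intro t ht
    have htI : t ∈ Set.Icc (0:ℝ) 1 := Set.Ioo_subset_Icc_self ht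
    have hGt : Integrable (G t) ν := hμint t htI
    have hGtL : Integrable (fun θ => G t θ * L θ) ν := by
      set δ : ℝ := min t (1 - t) / 2 with hδdef
      have hδ : 0 < δ := by
        have := ht.1; have := ht.2
        apply div_pos _ (by norm_num)
        exact lt_min (by linarith) (by linarith)
      have hmem1 : t - δ ∈ Set.Icc (0:ℝ) 1 := by
        constructor
        · have h := min_le_left t (1 - t); have := ht.2
          rw [hδdef]; nlinarith
        · have := ht.2; rw [hδdef]; nlinarith [lt_min (ht.1) (by linarith [ht.2] : (0:ℝ) < 1 - t)]
      have hmem2 : t + δ ∈ Set.Icc (0:ℝ) 1 := by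
        constructor
        · have := ht.1; rw [hδdef]
          nlinarith [lt_min (ht.1) (by linarith [ht.2] : (0:ℝ) < 1 - t)]
        · have h := min_le_right t (1 - t); rw [hδdef]; nlinarith
      apply Integrable.mono' (((hμint _ hmem2).add (hμint _ hmem1)).const_mul δ⁻¹)
        ((hGm t).mul hLm).aestronglyMeasurable
      filter_upwards [hp0pos, hp1pos] with θ h0 h1
      have hGpos : 0 < G t θ :=
        mul_pos (Real.rpow_pos_of_pos h1 _) (Real.rpow_pos_of_pos h0 _)
      rw [Real.norm_eq_abs, Pi.mul_apply, abs_mul, abs_of_pos hGpos]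
      have key := aux_rpow_log_bound h1 h0 (u := t) hδ
      simpa [hG, hL] using key
    have hae : ∀ᵐ θ ∂ν, (p1 θ ^ t * p0 θ ^ (1 - t) / μc t)
          * Real.log ((z1 * p1 θ) / (z0 * p0 θ))
        = Real.log (z1 / z0) * (G t θ / μc t) + (G t θ * L θ) / μc t := by
      filter_upwards [hp0pos, hp1pos] with θ h0 h1
      have e1 : (z1 * p1 θ) / (z0 * p0 θ) = (z1 / z0) * (p1 θ / p0 θ) :=
        mul_div_mul_comm z1 (p1 θ) z0 (p0 θ)
      rw [e1, Real.log_mul (div_pos hz1 hz0).ne' (div_pos h1 h0).ne']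
      simp only [hG, hL]
      ring
    rw [integral_congr_ae hae,
      integral_add ((hGt.div_const (μc t)).const_mul _) (hGtL.div_const (μc t)),
      integral_const_mul, integral_div, integral_div, ← hμc,
      div_self (hμpos t htI).ne', mul_one]
  -- conclusion
  have hae1 : ∀ᵐ x : ℝ ∂volume, x ∈ Set.uIoc (0:ℝ) 1 →
      (∫ θ, (p1 θ ^ x * p0 θ ^ (1 - x) / μc x) * Real.log ((z1 * p1 θ) / (z0 * p0 θ)) ∂ν)
        = Real.log (z1 / z0) + f x / μc x := by
    have hne : ∀ᵐ x : ℝ ∂volume, x ≠ 1 := by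
      rw [ae_iff]
      simpa using measure_singleton (1:ℝ)
    filter_upwards [hne] with x hx hxm
    rw [Set.uIoc_of_le zero_le_one] at hxm
    exact hinner x ⟨hxm.1, lt_of_le_of_ne hxm.2 hx⟩
  rw [intervalIntegral.integral_congr_ae hae1,
    intervalIntegral.integral_add intervalIntegrable_const hfdivII, hFTC,
    intervalIntegral.integral_const]
  simp
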